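/- Let X be a real or complex normed linear space. If a series ∑_{n=0}^∞ u_n with terms in X is (C,1) summable in X to some S ∈ X and satisfies Hardy's condition ‖u_n‖ = O(1/n) as n → ∞, then the series converges in X (to S). -/

import Mathlib

open Filter Finset Topology

set_option maxHeartbeats 1600000 in
/-- **Hardy's Tauberian theorem in a normed space** (Corollary 1). If a series `∑ u_n` in a
real or complex normed linear space `X` is `(C,1)` summable to `S ∈ X` and satisfies
Hardy's condition `‖u_n‖ = O(1/n)` as `n → ∞`, then the series converges in `X` to `S`. -/
theorem tauberian_cesaro_hardy
    {X : Type*} [NormedAddCommGroup X] [NormedSpace ℝ X]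
    (u : ℕ → X) (S : X)
    (hC1 : Tendsto (fun n : ℕ =>
        ((n : ℝ) + 1)⁻¹ • ∑ i ∈ range (n + 1), ∑ k ∈ range (i + 1), u k)
      atTop (𝓝 S))
    (hHardy : (fun n : ℕ => ‖u n‖) =O[atTop] fun n : ℕ => 1 / (n : ℝ)) :
    Tendsto (fun n : ℕ => ∑ k ∈ range (n + 1), u k) atTop (𝓝 S) := by
  set Sp : ℕ → X := fun n => ∑ k ∈ range (n + 1), u k with hSp
  set σ : ℕ → X := fun n => ((n : ℝ) + 1)⁻¹ • ∑ i ∈ range (n + 1), Sp i with hσ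
  have hσC1 : Tendsto σ atTop (𝓝 S) := hC1
  -- Hardy constant
  obtain ⟨C₀, hC₀⟩ := hHardy.bound
  obtain ⟨N₀, hN₀⟩ := eventually_atTop.mp hC₀
  set C : ℝ := |C₀| with hC
  have hCnn : 0 ≤ C := abs_nonneg _
  clear_value C
  have hu : ∀ j : ℕ, max N₀ 1 ≤ j → ‖u j‖ ≤ C / j := by
    intro j hj
    have hj1 : (1 : ℝ) ≤ j := by exact_mod_cast le_trans (le_max_right _ _) hj
    have := hN₀ j (le_trans (le_max_left _ _) hj)
    simp only [norm_norm, norm_div, norm_one, Real.norm_natCast] at this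
    calc ‖u j‖ ≤ C₀ * (1 / j) := this
      _ ≤ |C₀| * (1 / j) := by
          apply mul_le_mul_of_nonneg_right (le_abs_self _)
          positivity
      _ = C / j := by rw [hC]; ring
  -- the key identity
  have key : ∀ n d : ℕ, (d : ℝ) • (Sp n - S) =
      (((n + d : ℕ) : ℝ) + 1) • (σ (n + d) - S) - ((n : ℝ) + 1) • (σ n - S)
        - ∑ k ∈ Ico (n + 1) (n + d + 1), (Sp k - Sp n) := by
    intro n d
    have h1 : ((n : ℝ) + 1) • σ n = ∑ i ∈ range (n + 1), Sp i := by
      rw [hσ, smul_inv_smul₀ (by positivity)]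
    have h2 : (((n + d : ℕ) : ℝ) + 1) • σ (n + d) = ∑ i ∈ range (n + d + 1), Sp i := by
      rw [hσ, smul_inv_smul₀ (by positivity)]
    have h3 : ∑ k ∈ Ico (n + 1) (n + d + 1), Sp k
        = ∑ i ∈ range (n + d + 1), Sp i - ∑ i ∈ range (n + 1), Sp i :=
      Finset.sum_Ico_eq_sub _ (by omega)
    have h4 : ∑ k ∈ Ico (n + 1) (n + d + 1), (Sp k - Sp n)
        = (∑ k ∈ Ico (n + 1) (n + d + 1), Sp k) - (d : ℝ) • Sp n := by
      rw [Finset.sum_sub_distrib, Finset.sum_const, Nat.card_Ico]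
      congr 1
      rw [Nat.cast_smul_eq_nsmul]
      congr 1
      omega
    rw [h4, h3, ← h1, ← h2]
    have hc : ((n + d : ℕ) : ℝ) = (n : ℝ) + d := by push_cast; ring
    rw [hc]
    module
  -- main ε-δ argument
  rw [Metric.tendsto_atTop]
  intro ε hε
  set δ : ℝ := ε / (6 * (C + 1)) with hδdef
  have hδ : 0 < δ := by rw [hδdef]; positivity
  clear_value δ
  set εσ : ℝ := (ε / 3) / (1 + 4 / δ) with hεσdef
  have hεσ : 0 < εσ := by rw [hεσdef]; positivity
  clear_value εσ
  obtain ⟨N₁, hN₁⟩ := (Metric.tendsto_atTop.mp hσC1) εσ hεσ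
  refine ⟨max (max N₀ N₁) (max 1 (⌈1 / δ⌉₊ + 1)), fun n hn => ?_⟩
  have hn0 : N₀ ≤ n := le_trans (le_trans (le_max_left _ _) (le_max_left _ _)) hn
  have hn1 : N₁ ≤ n := le_trans (le_trans (le_max_right _ _) (le_max_left _ _)) hn
  have hnge1 : 1 ≤ n := le_trans (le_trans (le_max_left _ _) (le_max_right _ _)) hn
  have hnδ : 1 / δ ≤ (n : ℝ) := by
    have : ⌈1 / δ⌉₊ ≤ n := by
      have := le_trans (le_trans (le_max_right _ _) (le_max_right _ _)) hn
      omega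
    calc (1 : ℝ) / δ ≤ ⌈1 / δ⌉₊ := Nat.le_ceil _
      _ ≤ n := by exact_mod_cast this
  have hnR : (1 : ℝ) ≤ n := by exact_mod_cast hnge1
  set d : ℕ := ⌈δ * n⌉₊ with hd
  have hd1 : 1 ≤ d := by
    rw [hd]
    exact Nat.one_le_iff_ne_zero.mpr (by
      have : 0 < ⌈δ * n⌉₊ := Nat.ceil_pos.mpr (by positivity)
      omega)
  have hdR : (1 : ℝ) ≤ d := by exact_mod_cast hd1
  have hdpos : (0 : ℝ) < d := by linarith
  have hdl : δ * n ≤ (d : ℝ) := Nat.le_ceil _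
  have hdu : (d : ℝ) ≤ δ * n + 1 := le_of_lt (Nat.ceil_lt_add_one (by positivity))
  clear_value d
  -- bound on increments of partial sums
  have hub : ∀ j : ℕ, n + 1 ≤ j → ‖u j‖ ≤ C / (n + 1 : ℝ) := by
    intro j hj
    have hjm : max N₀ 1 ≤ j := by
      simp only [max_le_iff]; omega
    refine le_trans (hu j hjm) ?_
    apply div_le_div_of_nonneg_left hCnn (by positivity)
    exact_mod_cast hj
  have hSk : ∀ k ∈ Ico (n + 1) (n + d + 1), ‖Sp k - Sp n‖ ≤ (d : ℝ) * (C / (n + 1 : ℝ)) := by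
    intro k hk
    rw [Finset.mem_Ico] at hk
    have hkdiff : Sp k - Sp n = ∑ j ∈ Ico (n + 1) (k + 1), u j := by
      rw [hSp]
      exact (Finset.sum_Ico_eq_sub _ (by omega)).symm
    rw [hkdiff]
    calc ‖∑ j ∈ Ico (n + 1) (k + 1), u j‖ ≤ ∑ j ∈ Ico (n + 1) (k + 1), ‖u j‖ :=
          norm_sum_le _ _
      _ ≤ (Ico (n + 1) (k + 1)).card * (C / (n + 1 : ℝ)) := by
          rw [← nsmul_eq_mul]
          apply Finset.sum_le_card_nsmul
          intro j hj
          rw [Finset.mem_Ico] at hj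
          exact hub j hj.1
      _ ≤ (d : ℝ) * (C / (n + 1 : ℝ)) := by
          apply mul_le_mul_of_nonneg_right _ (by positivity)
          rw [Nat.card_Ico]
          have : k + 1 - (n + 1) ≤ d := by omega
          exact_mod_cast this
  have hT : ‖∑ k ∈ Ico (n + 1) (n + d + 1), (Sp k - Sp n)‖
      ≤ (d : ℝ) * ((d : ℝ) * (C / (n + 1 : ℝ))) := by
    calc ‖∑ k ∈ Ico (n + 1) (n + d + 1), (Sp k - Sp n)‖
        ≤ ∑ k ∈ Ico (n + 1) (n + d + 1), ‖Sp k - Sp n‖ := norm_sum_le _ _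
      _ ≤ (Ico (n + 1) (n + d + 1)).card * ((d : ℝ) * (C / (n + 1 : ℝ))) := by
          rw [← nsmul_eq_mul]
          exact Finset.sum_le_card_nsmul _ _ _ hSk
      _ = (d : ℝ) * ((d : ℝ) * (C / (n + 1 : ℝ))) := by
          rw [Nat.card_Ico]
          congr 2
          simp
  -- the σ bounds
  have hσn : ‖σ n - S‖ < εσ := by
    have := hN₁ n hn1
    rwa [dist_eq_norm] at this
  have hσm : ‖σ (n + d) - S‖ < εσ := by
    have := hN₁ (n + d) (by omega)
    rwa [dist_eq_norm] at this
  -- coefficient bounds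
  have hcoef2 : ((n : ℝ) + 1) ≤ (2 / δ) * d := by
    have h2n : (n : ℝ) + 1 ≤ 2 * n := by linarith
    have he : (2 / δ) * (δ * n) = 2 * n := by field_simp
    nlinarith [mul_le_mul_of_nonneg_left hdl (le_of_lt (by positivity : (0:ℝ) < 2 / δ))]
  have hcoef1 : (((n + d : ℕ) : ℝ) + 1) ≤ (1 + 2 / δ) * d := by
    have hc : ((n + d : ℕ) : ℝ) = (n : ℝ) + d := by push_cast; ring
    rw [hc]
    nlinarith
  -- third-term bound
  have hthird : (d : ℝ) * (C / (n + 1 : ℝ)) ≤ ε / 3 := by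
    have hnp : (0 : ℝ) < (n : ℝ) + 1 := by positivity
    have h2 : (1 : ℝ) ≤ δ * ((n : ℝ) + 1) := by
      have ha : δ * (1 / δ) = 1 := by field_simp
      have hb : δ * (1 / δ) ≤ δ * ((n : ℝ) + 1) := by
        apply mul_le_mul_of_nonneg_left _ hδ.le
        linarith
      linarith
    have hdn1 : (d : ℝ) / ((n : ℝ) + 1) ≤ 2 * δ := by
      rw [div_le_iff₀ hnp]
      have hmono : δ * (n : ℝ) ≤ δ * ((n : ℝ) + 1) :=
        mul_le_mul_of_nonneg_left (by linarith) hδ.le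
      linarith
    have heq : (d : ℝ) * (C / ((n : ℝ) + 1)) = ((d : ℝ) / ((n : ℝ) + 1)) * C := by ring
    rw [heq]
    calc ((d : ℝ) / ((n : ℝ) + 1)) * C ≤ (2 * δ) * C :=
          mul_le_mul_of_nonneg_right hdn1 hCnn
      _ = ε * C / (3 * (C + 1)) := by rw [hδdef]; field_simp; ring
      _ ≤ ε / 3 := by
          rw [div_le_div_iff₀ (by positivity) (by norm_num)]
          nlinarith
  -- putting it together
  have hkey := key n d
  have hnorm : (d : ℝ) * ‖Sp n - S‖ < (d : ℝ) * ε := by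
    have e1 : (d : ℝ) * ‖Sp n - S‖ = ‖(d : ℝ) • (Sp n - S)‖ := by
      rw [norm_smul, Real.norm_eq_abs, abs_of_nonneg (by positivity)]
    rw [e1, hkey]
    have tri : ‖(((n + d : ℕ) : ℝ) + 1) • (σ (n + d) - S) - ((n : ℝ) + 1) • (σ n - S)
          - ∑ k ∈ Ico (n + 1) (n + d + 1), (Sp k - Sp n)‖
        ≤ (((n + d : ℕ) : ℝ) + 1) * ‖σ (n + d) - S‖ + ((n : ℝ) + 1) * ‖σ n - S‖
          + ‖∑ k ∈ Ico (n + 1) (n + d + 1), (Sp k - Sp n)‖ := by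
      calc ‖_ - _ - _‖ ≤ ‖(((n + d : ℕ) : ℝ) + 1) • (σ (n + d) - S) - ((n : ℝ) + 1) • (σ n - S)‖
            + ‖∑ k ∈ Ico (n + 1) (n + d + 1), (Sp k - Sp n)‖ := norm_sub_le _ _
        _ ≤ ‖(((n + d : ℕ) : ℝ) + 1) • (σ (n + d) - S)‖ + ‖((n : ℝ) + 1) • (σ n - S)‖
            + ‖∑ k ∈ Ico (n + 1) (n + d + 1), (Sp k - Sp n)‖ := by
              gcongr
              exact norm_sub_le _ _
        _ = _ := by
              rw [norm_smul, norm_smul, Real.norm_eq_abs, Real.norm_eq_abs,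
                abs_of_nonneg (by positivity), abs_of_nonneg (by positivity)]
    refine lt_of_le_of_lt tri ?_
    have b1 : (((n + d : ℕ) : ℝ) + 1) * ‖σ (n + d) - S‖ < (1 + 2 / δ) * d * εσ := by
      calc (((n + d : ℕ) : ℝ) + 1) * ‖σ (n + d) - S‖ < (((n + d : ℕ) : ℝ) + 1) * εσ := by
            apply mul_lt_mul_of_pos_left hσm (by positivity)
        _ ≤ (1 + 2 / δ) * d * εσ := by
            apply mul_le_mul_of_nonneg_right hcoef1 (le_of_lt hεσ)
    have b2 : ((n : ℝ) + 1) * ‖σ n - S‖ < (2 / δ) * d * εσ := by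
      calc ((n : ℝ) + 1) * ‖σ n - S‖ < ((n : ℝ) + 1) * εσ := by
            apply mul_lt_mul_of_pos_left hσn (by positivity)
        _ ≤ (2 / δ) * d * εσ := by
            apply mul_le_mul_of_nonneg_right hcoef2 (le_of_lt hεσ)
    have b3 : ‖∑ k ∈ Ico (n + 1) (n + d + 1), (Sp k - Sp n)‖ ≤ (d : ℝ) * (ε / 3) :=
      le_trans hT (by
        apply mul_le_mul_of_nonneg_left hthird (le_of_lt hdpos))
    have hsum : (1 + 2 / δ) * d * εσ + (2 / δ) * d * εσ = (d : ℝ) * (ε / 3) := by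
      have h : (1 + 4 / δ) * εσ = ε / 3 := by
        rw [hεσdef]
        field_simp
      calc (1 + 2 / δ) * d * εσ + (2 / δ) * d * εσ = ((1 + 4 / δ) * εσ) * d := by ring
        _ = (ε / 3) * d := by rw [h]
        _ = (d : ℝ) * (ε / 3) := by ring
    have hde3 : (0 : ℝ) < (d : ℝ) * (ε / 3) := by positivity
    have hde : (d : ℝ) * ε = 3 * ((d : ℝ) * (ε / 3)) := by ring
    linarith [b1, b2, b3, hsum]
  have : ‖Sp n - S‖ < ε := by
    have := (mul_lt_mul_iff_right₀ hdpos).mp hnorm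
    exact this
  rwa [dist_eq_norm]
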